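/- arXiv:2509.18977 — 7 statements merged into one kernel-verified Lean document; each statement's English description precedes it below -/
import Mathlib

section
/- For any two Hermitian n×n complex matrices A and B with eigenvalues λ₁ ≥ λ₂ ≥ ... ≥ λₙ and μ₁ ≥ μ₂ ≥ ... ≥ μₙ (listed with multiplicity in decreasing order), the trace of AB is a real number satisfying ∑_{j=1}^n λⱼ μ_{n+1-j} ≤ trace(AB) ≤ ∑_{j=1}^n λⱼ μⱼ. -/
open Matrix Finset Complex

/-- Von Neumann's trace inequality for Hermitian matrices. -/

theorem vonNeumann_trace_inequality {n : ℕ} (A B : Matrix (Fin n) (Fin n) ℂ)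
    (hA : A.IsHermitian) (hB : B.IsHermitian)
    (lam mu : Fin n → ℝ) (hlam : Antitone lam) (hmu : Antitone mu)
    (hlamEig : ∃ e : Equiv.Perm (Fin n), lam = hA.eigenvalues ∘ e)
    (hmuEig : ∃ e : Equiv.Perm (Fin n), mu = hB.eigenvalues ∘ e) :
    (A * B).trace.im = 0 ∧
    ∑ j, lam j * mu j.rev ≤ (A * B).trace.re ∧
    (A * B).trace.re ≤ ∑ j, lam j * mu j := by
  classical
  obtain ⟨e, he⟩ := hlamEig
  obtain ⟨f, hf⟩ := hmuEig
  set α : Fin n → ℝ := hA.eigenvalues with hα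
  set β : Fin n → ℝ := hB.eigenvalues with hβ
  set D : Matrix (Fin n) (Fin n) ℂ := diagonal (RCLike.ofReal ∘ hA.eigenvalues) with hD
  set E : Matrix (Fin n) (Fin n) ℂ := diagonal (RCLike.ofReal ∘ hB.eigenvalues) with hE
  set U : Matrix (Fin n) (Fin n) ℂ := (hA.eigenvectorUnitary : Matrix (Fin n) (Fin n) ℂ) with hU
  set V : Matrix (Fin n) (Fin n) ℂ := (hB.eigenvectorUnitary : Matrix (Fin n) (Fin n) ℂ) with hV
  set W : Matrix (Fin n) (Fin n) ℂ := star U * V with hWdef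
  set S : Matrix (Fin n) (Fin n) ℝ := Matrix.of fun i j => Complex.normSq (W i j) with hS
  -- trace computation
  have hkey : (A * B).trace = (D * W * E * star W).trace := by
    conv_lhs => rw [hA.spectral_theorem, hB.spectral_theorem]
    simp only [Unitary.conjStarAlgAut_apply]
    rw [show U * D * star U * (V * E * star V)
        = U * (D * star U * (V * E * star V)) by simp only [Matrix.mul_assoc]]
    rw [Matrix.trace_mul_comm]
    congr 1
    rw [hWdef, StarMul.star_mul, star_star]
    simp only [Matrix.mul_assoc]
  have hentry : ∀ i j, (D * W * E) i j = (α i : ℂ) * W i j * (β j : ℂ) := by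
    intro i j
    simp [hD, hE, Matrix.diagonal_mul, Matrix.mul_diagonal, hα, hβ]
  have hexp : (A * B).trace = ((∑ i, ∑ j, α i * β j * S i j : ℝ) : ℂ) := by
    rw [hkey, Matrix.trace]
    rw [show ∑ i, (D * W * E * star W).diag i
        = ∑ i, ∑ j, (D * W * E) i j * (starRingEnd ℂ) (W i j) by
      refine Finset.sum_congr rfl fun i _ => ?_
      simp [Matrix.diag_apply, Matrix.mul_apply, Matrix.star_apply, RCLike.star_def]]
    push_cast
    refine Finset.sum_congr rfl fun i _ => Finset.sum_congr rfl fun j _ => ?_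
    rw [hentry]
    simp only [hS, Matrix.of_apply, ← Complex.mul_conj]
    ring
  -- S is doubly stochastic
  have hWW : W * star W = 1 := by
    rw [hWdef, StarMul.star_mul, star_star]
    rw [show star U * V * (star V * U) = star U * (V * star V) * U by
      simp only [Matrix.mul_assoc]]
    rw [show (V * star V : Matrix (Fin n) (Fin n) ℂ) = 1 from
      Matrix.mem_unitaryGroup_iff.mp hB.eigenvectorUnitary.2]
    rw [Matrix.mul_one]
    exact Matrix.mem_unitaryGroup_iff'.mp hA.eigenvectorUnitary.2
  have hWW' : star W * W = 1 := by
    rw [hWdef, StarMul.star_mul, star_star]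
    rw [show star V * U * (star U * V) = star V * (U * star U) * V by
      simp only [Matrix.mul_assoc]]
    rw [show (U * star U : Matrix (Fin n) (Fin n) ℂ) = 1 from
      Matrix.mem_unitaryGroup_iff.mp hA.eigenvectorUnitary.2]
    rw [Matrix.mul_one]
    exact Matrix.mem_unitaryGroup_iff'.mp hB.eigenvectorUnitary.2
  have hSds : S ∈ doublyStochastic ℝ (Fin n) := by
    rw [mem_doublyStochastic_iff_sum]
    refine ⟨fun i j => Complex.normSq_nonneg _, fun i => ?_, fun j => ?_⟩
    · have h1 := congrFun (congrFun hWW i) i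
      rw [Matrix.mul_apply] at h1
      simp only [Matrix.star_apply, RCLike.star_def, Complex.mul_conj,
        Matrix.one_apply_eq] at h1
      exact_mod_cast h1
    · have h1 := congrFun (congrFun hWW' j) j
      rw [Matrix.mul_apply] at h1
      simp only [Matrix.star_apply, RCLike.star_def, ← Complex.normSq_eq_conj_mul_self,
        Matrix.one_apply_eq] at h1
      exact_mod_cast h1
  obtain ⟨w, hw0, hw1, hwS⟩ := exists_eq_sum_perm_of_mem_doublyStochastic hSds
  -- rewrite the double sum via Birkhoff
  have hPentry : ∀ (σ : Equiv.Perm (Fin n)) (i j : Fin n),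
      (σ.permMatrix ℝ) i j = if σ i = j then 1 else 0 := by
    intro σ i j
    simp [Equiv.Perm.permMatrix, PEquiv.toMatrix_apply, Equiv.toPEquiv_apply, eq_comm]
  have hSentry : ∀ i j, S i j
      = ∑ σ : Equiv.Perm (Fin n), w σ * (if σ i = j then 1 else 0) := by
    intro i j
    conv_lhs => rw [← hwS]
    simp [Matrix.sum_apply, Equiv.Perm.permMatrix, PEquiv.toMatrix_apply,
      Equiv.toPEquiv_apply, Option.some.injEq, mul_ite, mul_one, mul_zero, eq_comm]
  have hsum : ∑ i, ∑ j, α i * β j * S i j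
      = ∑ σ : Equiv.Perm (Fin n), w σ * ∑ i, α i * β (σ i) := by
    calc ∑ i, ∑ j, α i * β j * S i j
        = ∑ i, ∑ j, ∑ σ : Equiv.Perm (Fin n),
            (if σ i = j then w σ * (α i * β j) else 0) := by
          refine Finset.sum_congr rfl fun i _ => Finset.sum_congr rfl fun j _ => ?_
          rw [hSentry, Finset.mul_sum]
          refine Finset.sum_congr rfl fun σ _ => ?_
          split <;> ring
      _ = ∑ σ : Equiv.Perm (Fin n), ∑ i, ∑ j,
            (if σ i = j then w σ * (α i * β j) else 0) := by
          rw [show (∑ i, ∑ j, ∑ σ : Equiv.Perm (Fin n),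
              (if σ i = j then w σ * (α i * β j) else 0))
              = ∑ i, ∑ σ : Equiv.Perm (Fin n), ∑ j,
              (if σ i = j then w σ * (α i * β j) else 0) from
            Finset.sum_congr rfl fun i _ => Finset.sum_comm]
          exact Finset.sum_comm
      _ = ∑ σ : Equiv.Perm (Fin n), w σ * ∑ i, α i * β (σ i) := by
          refine Finset.sum_congr rfl fun σ _ => ?_
          rw [Finset.mul_sum]
          refine Finset.sum_congr rfl fun i _ => ?_
          rw [Finset.sum_ite_eq (Finset.univ) (σ i) (fun j => w σ * (α i * β j))]
          simp [mul_comm, mul_assoc, mul_left_comm]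
  have hperm : ∀ σ : Equiv.Perm (Fin n),
      ∑ i, α i * β (σ i) = ∑ i, lam i * mu ((e.trans (σ.trans f.symm)) i) := by
    intro σ
    rw [← Equiv.sum_comp e (fun i => α i * β (σ i))]
    refine Finset.sum_congr rfl fun i _ => ?_
    simp [he, hf, Equiv.trans_apply, Equiv.apply_symm_apply]
  have hmono : Monovary lam mu := hlam.monovary hmu
  have hmurev : Monotone (fun i : Fin n => mu i.rev) :=
    fun i j h => hmu (Fin.rev_le_rev.mpr h)
  have hanti : Antivary lam (fun i : Fin n => mu i.rev) := hlam.antivary hmurev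
  have hub : ∀ τ : Equiv.Perm (Fin n), ∑ i, lam i * mu (τ i) ≤ ∑ i, lam i * mu i :=
    fun τ => hmono.sum_mul_comp_perm_le_sum_mul (σ := τ)
  have hlb : ∀ τ : Equiv.Perm (Fin n),
      ∑ i, lam i * mu i.rev ≤ ∑ i, lam i * mu (τ i) := by
    intro τ
    simpa [Fin.rev_rev] using
      hanti.sum_mul_le_sum_mul_comp_perm (σ := τ.trans (⟨Fin.rev, Fin.rev, Fin.rev_rev, Fin.rev_rev⟩ : Equiv.Perm (Fin n)))
  refine ⟨by rw [hexp]; simp, ?_, ?_⟩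
  · rw [hexp, Complex.ofReal_re, hsum]
    calc ∑ j, lam j * mu j.rev
        = ∑ σ : Equiv.Perm (Fin n), w σ * ∑ j, lam j * mu j.rev := by
          rw [← Finset.sum_mul, hw1, one_mul]
      _ ≤ ∑ σ : Equiv.Perm (Fin n), w σ * ∑ i, α i * β (σ i) :=
          Finset.sum_le_sum fun σ _ => mul_le_mul_of_nonneg_left
            (by rw [hperm σ]; exact hlb _) (hw0 σ)
  · rw [hexp, Complex.ofReal_re, hsum]
    calc ∑ σ : Equiv.Perm (Fin n), w σ * ∑ i, α i * β (σ i)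
        ≤ ∑ σ : Equiv.Perm (Fin n), w σ * ∑ i, lam i * mu i :=
          Finset.sum_le_sum fun σ _ => mul_le_mul_of_nonneg_left
            (by rw [hperm σ]; exact hub _) (hw0 σ)
      _ = ∑ i, lam i * mu i := by rw [← Finset.sum_mul, hw1, one_mul]
end

section
/- For an n×n real matrix M with entries M_{jk} = sin(π|j−k|/n)/sin(π/n) (indices j,k ∈ {0,...,n−1}, n ≥ 3), the vector φₖ with components (φₖ)ⱼ = e^{2πijk/n} is an eigenvector of M with eigenvalue −1/(cos(π/n) − cos(2πk/n)) for every k ∈ {1,...,n−1}. -/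
open Complex Finset

set_option maxHeartbeats 1000000 in
/-- Eigenvectors and eigenvalues of the distance matrix of the uniform circle TSP. -/
theorem uniform_circle_eigenvector {n : ℕ} (hn : 3 ≤ n)
    (M : Matrix (Fin n) (Fin n) ℝ)
    (hM : ∀ j k : Fin n,
      M j k = Real.sin (Real.pi * |(j.val : ℝ) - (k.val : ℝ)| / n) / Real.sin (Real.pi / n))
    (k : Fin n) (hk : 1 ≤ k.val)
    (φ : Fin n → ℂ)
    (hφ : ∀ j : Fin n,
      φ j = Complex.exp (2 * Real.pi * Complex.I * j.val * k.val / n)) :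
    (M.map (Complex.ofReal)).mulVec φ =
      (((-1) / (Real.cos (Real.pi / n) - Real.cos (2 * Real.pi * k.val / n)) : ℝ) : ℂ) • φ := by
  have hnz : NeZero n := ⟨by omega⟩
  have hnR : (0:ℝ) < n := by exact_mod_cast (by omega : 0 < n)
  have hn0 : (n:ℝ) ≠ 0 := ne_of_gt hnR
  have hnC : (n:ℂ) ≠ 0 := by exact_mod_cast hn0
  have hπ := Real.pi_pos
  have hkR : (1:ℝ) ≤ (k.val:ℝ) := by exact_mod_cast hk
  have hkn : (k.val:ℝ) < n := by exact_mod_cast k.isLt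
  have hs_pos : 0 < Real.sin (Real.pi / n) := by
    apply Real.sin_pos_of_pos_of_lt_pi
    · positivity
    · exact div_lt_self hπ (by exact_mod_cast (by omega : 1 < n))
  have hsne : Real.sin (Real.pi / n) ≠ 0 := ne_of_gt hs_pos
  -- cos (2πk/n) < cos (π/n)
  have hcoslt : Real.cos (2 * Real.pi * k.val / n) < Real.cos (Real.pi / n) := by
    have hcc := Real.cos_sub_cos (Real.pi / n) (2 * Real.pi * k.val / n)
    have h1 : (0:ℝ) < (Real.pi / n + 2 * Real.pi * k.val / n) / 2 := by positivity
    have h1' : (Real.pi / n + 2 * Real.pi * k.val / n) / 2 < Real.pi := by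
      rw [div_lt_iff₀ (by norm_num : (0:ℝ) < 2), ← add_div, div_lt_iff₀ hnR]
      have hkn1 : (k.val:ℝ) + 1 ≤ n := by exact_mod_cast (by omega : k.val + 1 ≤ n)
      nlinarith
    have h2 : (0:ℝ) < (2 * Real.pi * k.val / n - Real.pi / n) / 2 := by
      have : Real.pi / n < 2 * Real.pi * k.val / n := by
        rw [div_lt_div_iff₀ hnR hnR]
        have hpn : 0 < Real.pi * n := mul_pos hπ hnR
        nlinarith [hpn, mul_le_mul_of_nonneg_left hkR hpn.le]
      linarith
    have h2' : (2 * Real.pi * k.val / n - Real.pi / n) / 2 < Real.pi := by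
      have : 2 * Real.pi * k.val / n < 2 * Real.pi := by
        rw [div_lt_iff₀ hnR]; nlinarith
      have hp : 0 < Real.pi / n := by positivity
      linarith
    have hflip : Real.sin ((Real.pi / n - 2 * Real.pi * k.val / n) / 2)
        = - Real.sin ((2 * Real.pi * k.val / n - Real.pi / n) / 2) := by
      rw [show (Real.pi / n - 2 * Real.pi * k.val / n) / 2
          = -((2 * Real.pi * k.val / n - Real.pi / n) / 2) by ring, Real.sin_neg]
    have hsin1 := Real.sin_pos_of_pos_of_lt_pi h1 h1'
    have hsin2 := Real.sin_pos_of_pos_of_lt_pi h2 h2'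
    nlinarith [mul_pos hsin1 hsin2]
  have hden : Real.cos (Real.pi / n) - Real.cos (2 * Real.pi * k.val / n) ≠ 0 :=
    ne_of_gt (sub_pos.mpr hcoslt)
  -- complex constants
  set ζ : ℂ := Complex.exp (2 * (Real.pi:ℂ) * Complex.I * k.val / n) with hζ_def
  set α : ℂ := Complex.exp ((Real.pi:ℂ) * Complex.I / n) with hα_def
  have hα0 : α ≠ 0 := Complex.exp_ne_zero _
  have hζ0 : ζ ≠ 0 := Complex.exp_ne_zero _
  have hαinv : α⁻¹ = Complex.exp (-((Real.pi:ℂ) * Complex.I / n)) := by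
    rw [hα_def, ← Complex.exp_neg]
  have hζinv : ζ⁻¹ = Complex.exp (-(2 * (Real.pi:ℂ) * Complex.I * k.val / n)) := by
    rw [hζ_def, ← Complex.exp_neg]
  have hζn : ζ ^ n = 1 := by
    rw [hζ_def, ← Complex.exp_nat_mul,
      show (n:ℂ) * (2 * (Real.pi:ℂ) * Complex.I * k.val / n)
        = (k.val:ℂ) * (2 * (Real.pi:ℂ) * Complex.I) by field_simp,
      Complex.exp_nat_mul, Complex.exp_two_pi_mul_I, one_pow]
  have hαn : α ^ n = -1 := by
    rw [hα_def, ← Complex.exp_nat_mul,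
      show (n:ℂ) * ((Real.pi:ℂ) * Complex.I / n) = (Real.pi:ℂ) * Complex.I by field_simp,
      Complex.exp_pi_mul_I]
  have hαinvn : (α⁻¹) ^ n = -1 := by rw [inv_pow, hαn]; norm_num
  have hA1 : ζ * α ≠ 1 := by
    intro h
    have h2 : (ζ * α) ^ n = 1 := by rw [h, one_pow]
    rw [mul_pow, hζn, hαn, one_mul] at h2
    norm_num at h2
  have hB1 : ζ * α⁻¹ ≠ 1 := by
    intro h
    have h2 : (ζ * α⁻¹) ^ n = 1 := by rw [h, one_pow]
    rw [mul_pow, hζn, hαinvn, one_mul] at h2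
    norm_num at h2
  have hA1' : ζ * α - 1 ≠ 0 := sub_ne_zero_of_ne hA1
  have hB1' : ζ * α⁻¹ - 1 ≠ 0 := sub_ne_zero_of_ne hB1
  have hsC : ((Real.sin (Real.pi / n) : ℝ) : ℂ) ≠ 0 := Complex.ofReal_ne_zero.mpr hsne
  -- sin, cos via exponentials
  have hsinexp : ∀ θ : ℝ, ((Real.sin θ : ℝ) : ℂ) * (2 * Complex.I)
      = Complex.exp ((θ:ℂ) * Complex.I) - Complex.exp (-((θ:ℂ) * Complex.I)) := by
    intro θ
    rw [Complex.ofReal_sin, Complex.sin]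
    simp only [neg_mul]
    linear_combination (Complex.exp (-((θ:ℂ) * Complex.I)) - Complex.exp ((θ:ℂ) * Complex.I)) * Complex.I_mul_I
  have hcosexp : ∀ θ : ℝ, ((Real.cos θ : ℝ) : ℂ) * 2
      = Complex.exp ((θ:ℂ) * Complex.I) + Complex.exp (-((θ:ℂ) * Complex.I)) := by
    intro θ
    rw [Complex.ofReal_cos, Complex.cos]
    simp only [neg_mul]
    ring
  have e1 : Complex.exp (((Real.pi / n : ℝ) : ℂ) * Complex.I) = α := by
    rw [hα_def]; congr 1; push_cast; ring
  have e2 : Complex.exp (-(((Real.pi / n : ℝ) : ℂ) * Complex.I)) = α⁻¹ := by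
    rw [hαinv]; congr 1; push_cast; ring
  have eζ : Complex.exp (((2 * Real.pi * k.val / n : ℝ) : ℂ) * Complex.I) = ζ := by
    rw [hζ_def]; congr 1; push_cast; ring
  have eζ' : Complex.exp (-(((2 * Real.pi * k.val / n : ℝ) : ℂ) * Complex.I)) = ζ⁻¹ := by
    rw [hζinv]; congr 1; push_cast; ring
  have hdiff : α - α⁻¹ = ((Real.sin (Real.pi / n) : ℝ) : ℂ) * (2 * Complex.I) := by
    have h := hsinexp (Real.pi / n); rw [e1, e2] at h; exact h.symm
  have hαsum : α + α⁻¹ = ((Real.cos (Real.pi / n) : ℝ) : ℂ) * 2 := by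
    have h := hcosexp (Real.pi / n); rw [e1, e2] at h; exact h.symm
  have hζsum : ζ + ζ⁻¹ = ((Real.cos (2 * Real.pi * k.val / n) : ℝ) : ℂ) * 2 := by
    have h := hcosexp (2 * Real.pi * k.val / n); rw [eζ, eζ'] at h; exact h.symm
  have hprod : (ζ * α - 1) * (ζ * α⁻¹ - 1)
      = 2 * ζ * (((Real.cos (2 * Real.pi * k.val / n) : ℝ) : ℂ)
          - ((Real.cos (Real.pi / n) : ℝ) : ℂ)) := by
    have hαβ : α * α⁻¹ = 1 := mul_inv_cancel₀ hα0
    have hζξ : ζ * ζ⁻¹ = 1 := mul_inv_cancel₀ hζ0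
    linear_combination ζ ^ 2 * hαβ + ζ * hζsum - ζ * hαsum - hζξ
  have hAB : ζ * α - ζ * α⁻¹ = 2 * Complex.I * ((Real.sin (Real.pi / n) : ℝ) : ℂ) * ζ := by
    linear_combination ζ * hdiff
  -- φ as powers of ζ
  have hφζ : ∀ m : Fin n, φ m = ζ ^ m.val := by
    intro m
    rw [hφ m, hζ_def, ← Complex.exp_nat_mul]
    congr 1; push_cast; ring
  have hζpow : ∀ a : ℕ, ζ ^ (a % n) = ζ ^ a := by
    intro a
    conv_rhs => rw [← Nat.div_add_mod a n]
    rw [pow_add, pow_mul, hζn, one_pow, one_mul]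
  -- the main j-independent sum
  have hsum : ∑ r : Fin n,
      ((Real.sin (Real.pi * r.val / n) / Real.sin (Real.pi / n) : ℝ) : ℂ) * ζ ^ r.val
      = (((-1) / (Real.cos (Real.pi / n) - Real.cos (2 * Real.pi * k.val / n)) : ℝ) : ℂ) := by
    rw [Fin.sum_univ_eq_sum_range
      (fun i => ((Real.sin (Real.pi * i / n) / Real.sin (Real.pi / n) : ℝ) : ℂ) * ζ ^ i) n]
    have hterm : ∀ i : ℕ,
        ((Real.sin (Real.pi * i / n) / Real.sin (Real.pi / n) : ℝ) : ℂ) * ζ ^ i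
        = ((ζ * α) ^ i - (ζ * α⁻¹) ^ i)
            / (2 * Complex.I * ((Real.sin (Real.pi / n) : ℝ) : ℂ)) := by
      intro i
      have e3 : Complex.exp (((Real.pi * i / n : ℝ) : ℂ) * Complex.I) = α ^ i := by
        rw [hα_def, ← Complex.exp_nat_mul]; congr 1; push_cast; ring
      have e4 : Complex.exp (-(((Real.pi * i / n : ℝ) : ℂ) * Complex.I)) = (α⁻¹) ^ i := by
        rw [hαinv, ← Complex.exp_nat_mul]; congr 1; push_cast; ring
      have hsi := hsinexp (Real.pi * i / n)
      rw [e3, e4] at hsi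
      have hsin_eq : ((Real.sin (Real.pi * i / n) : ℝ) : ℂ)
          = (α ^ i - (α⁻¹) ^ i) / (2 * Complex.I) := by
        rw [eq_div_iff (by simp [Complex.I_ne_zero] : (2 : ℂ) * Complex.I ≠ 0)]
        exact hsi
      rw [Complex.ofReal_div, hsin_eq, mul_pow, mul_pow]
      field_simp
    rw [Finset.sum_congr rfl (fun i _ => hterm i), ← Finset.sum_div,
      Finset.sum_sub_distrib, geom_sum_eq hA1 n, geom_sum_eq hB1 n,
      mul_pow, mul_pow, hζn, hαn, hαinvn, one_mul]
    have hc12 : ((Real.cos (Real.pi / n) : ℝ) : ℂ)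
        - ((Real.cos (2 * Real.pi * k.val / n) : ℝ) : ℂ) ≠ 0 := by
      rw [← Complex.ofReal_sub]; exact Complex.ofReal_ne_zero.mpr hden
    have hfrac : ((-1 : ℂ) - 1) / (ζ * α - 1) - ((-1 : ℂ) - 1) / (ζ * α⁻¹ - 1)
        = (2 * (ζ * α - ζ * α⁻¹)) / ((ζ * α - 1) * (ζ * α⁻¹ - 1)) := by
      rw [div_sub_div _ _ hA1' hB1']
      congr 1
      ring
    rw [hfrac, hAB, hprod]
    have hc21 : ((Real.cos (2 * Real.pi * k.val / n) : ℝ) : ℂ)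
        - ((Real.cos (Real.pi / n) : ℝ) : ℂ) ≠ 0 := fun h => hc12 (by linear_combination -h)
    have hd1 : (2 * ζ * (((Real.cos (2 * Real.pi * k.val / n) : ℝ) : ℂ)
        - ((Real.cos (Real.pi / n) : ℝ) : ℂ))) * (2 * Complex.I
          * ((Real.sin (Real.pi / n) : ℝ) : ℂ)) ≠ 0 :=
      mul_ne_zero (mul_ne_zero (mul_ne_zero two_ne_zero hζ0) hc21)
        (mul_ne_zero (mul_ne_zero two_ne_zero Complex.I_ne_zero) hsC)
    rw [show (((-1) / (Real.cos (Real.pi / n) - Real.cos (2 * Real.pi * k.val / n)) : ℝ) : ℂ)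
        = (-1 : ℂ) / (((Real.cos (Real.pi / n) : ℝ) : ℂ)
            - ((Real.cos (2 * Real.pi * k.val / n) : ℝ) : ℂ)) by push_cast; ring]
    rw [div_div, div_eq_div_iff hd1 hc12]
    ring
  -- conclude entrywise
  funext j
  have hkey : ∀ r : Fin n, ((M j (j + r) : ℝ) : ℂ) * φ (j + r)
      = ((Real.sin (Real.pi * r.val / n) / Real.sin (Real.pi / n) : ℝ) : ℂ)
          * ζ ^ r.val * ζ ^ j.val := by
    intro r
    have hval : (j + r).val = (j.val + r.val) % n := Fin.val_add j r
    have hφjr : φ (j + r) = ζ ^ j.val * ζ ^ r.val := by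
      rw [hφζ, hval, hζpow, pow_add]
    have hMjr : M j (j + r) = Real.sin (Real.pi * r.val / n) / Real.sin (Real.pi / n) := by
      rw [hM j (j + r), hval]
      rcases lt_or_ge (j.val + r.val) n with h | h
      · rw [Nat.mod_eq_of_lt h]
        have habs : |(j.val : ℝ) - ((j.val + r.val : ℕ) : ℝ)| = (r.val : ℝ) := by
          push_cast
          rw [show (j.val : ℝ) - ((j.val : ℝ) + (r.val : ℝ)) = -(r.val : ℝ) by ring,
            abs_neg]
          exact abs_of_nonneg (by positivity)
        rw [habs]
      · have hmod : (j.val + r.val) % n = j.val + r.val - n := by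
          rw [Nat.mod_eq_sub_mod h, Nat.mod_eq_of_lt (by omega)]
        rw [hmod]
        have hcast : ((j.val + r.val - n : ℕ) : ℝ) = (j.val : ℝ) + (r.val : ℝ) - n := by
          rw [Nat.cast_sub h]; push_cast; ring
        have hrn : (r.val : ℝ) ≤ n := le_of_lt (by exact_mod_cast r.isLt)
        have habs : |(j.val : ℝ) - ((j.val + r.val - n : ℕ) : ℝ)| = (n : ℝ) - (r.val : ℝ) := by
          rw [hcast, show (j.val : ℝ) - ((j.val : ℝ) + (r.val : ℝ) - n)
            = (n : ℝ) - (r.val : ℝ) by ring]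
          exact abs_of_nonneg (by linarith)
        rw [habs, show Real.pi * ((n : ℝ) - (r.val : ℝ)) / n
            = Real.pi - Real.pi * (r.val : ℝ) / n by field_simp,
          Real.sin_pi_sub]
    rw [hMjr, hφjr]
    ring
  have hmv : (M.map (Complex.ofReal)).mulVec φ j = ∑ m : Fin n, ((M j m : ℝ) : ℂ) * φ m := by
    simp [Matrix.mulVec, dotProduct, Matrix.map_apply]
  rw [hmv, Pi.smul_apply, smul_eq_mul]
  calc ∑ m : Fin n, ((M j m : ℝ) : ℂ) * φ m
      = ∑ r : Fin n, ((M j (j + r) : ℝ) : ℂ) * φ (j + r) := by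
        rw [← Equiv.sum_comp (Equiv.addLeft j) (fun m => ((M j m : ℝ) : ℂ) * φ m)]
        simp [Equiv.coe_addLeft]
    _ = ∑ r : Fin n, ((Real.sin (Real.pi * r.val / n) / Real.sin (Real.pi / n) : ℝ) : ℂ)
          * ζ ^ r.val * ζ ^ j.val := Finset.sum_congr rfl (fun r _ => hkey r)
    _ = (∑ r : Fin n, ((Real.sin (Real.pi * r.val / n) / Real.sin (Real.pi / n) : ℝ) : ℂ)
          * ζ ^ r.val) * ζ ^ j.val := by rw [Finset.sum_mul]
    _ = (((-1) / (Real.cos (Real.pi / n) - Real.cos (2 * Real.pi * k.val / n)) : ℝ) : ℂ)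
          * φ j := by rw [hsum, hφζ j]
end

section
/- If an N×N real symmetric matrix E with zero diagonal is a Euclidean distance matrix (i.e., there exist vectors v₁,...,v_N in some ℝ^k with E_{ij} = ‖vᵢ − vⱼ‖²), then the matrix −P E P is positive semidefinite, where P = I − (1/N)J is the projection onto the hyperplane orthogonal to the all-ones vector. -/
open Matrix Finset

lemma quad_nonpos {N k : ℕ} (v : Fin N → EuclideanSpace ℝ (Fin k))
    (y : Fin N → ℝ) (hy : ∑ i, y i = 0) :
    ∑ i, ∑ j, y i * (‖v i - v j‖ ^ 2 * y j) ≤ 0 := by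
  have hw : (∑ i, ∑ j, y i * (y j * (inner ℝ (v i) (v j) : ℝ)))
      = ‖∑ i, y i • v i‖ ^ 2 := by
    rw [← real_inner_self_eq_norm_sq, sum_inner]
    refine Finset.sum_congr rfl fun i _ => ?_
    rw [inner_sum]
    refine Finset.sum_congr rfl fun j _ => ?_
    rw [real_inner_smul_left, real_inner_smul_right]
  have hA : ∑ i : Fin N, ∑ j : Fin N, y i * ‖v i‖ ^ 2 * y j = 0 := by
    simp_rw [← Finset.mul_sum, hy, mul_zero, Finset.sum_const_zero]
  have hB : ∑ i : Fin N, ∑ j : Fin N, y i * (y j * ‖v j‖ ^ 2) = 0 := by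
    simp_rw [← Finset.mul_sum, ← Finset.sum_mul, hy, zero_mul]
  have split : ∀ f g h : Fin N → Fin N → ℝ,
      ∑ i, ∑ j, (f i j + g i j - 2 * h i j)
        = (∑ i, ∑ j, f i j) + (∑ i, ∑ j, g i j) - 2 * ∑ i, ∑ j, h i j := by
    intro f g h
    simp [Finset.sum_add_distrib, Finset.sum_sub_distrib, Finset.mul_sum]
  have key : ∑ i, ∑ j, y i * (‖v i - v j‖ ^ 2 * y j)
      = -2 * ‖∑ i, y i • v i‖ ^ 2 := by
    calc ∑ i, ∑ j, y i * (‖v i - v j‖ ^ 2 * y j)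
        = ∑ i, ∑ j, (y i * ‖v i‖ ^ 2 * y j + y i * (y j * ‖v j‖ ^ 2)
            - 2 * (y i * (y j * (inner ℝ (v i) (v j) : ℝ)))) := by
          refine Finset.sum_congr rfl fun i _ => Finset.sum_congr rfl fun j _ => ?_
          rw [@norm_sub_sq_real]
          ring
      _ = (∑ i : Fin N, ∑ j : Fin N, y i * ‖v i‖ ^ 2 * y j)
            + (∑ i : Fin N, ∑ j : Fin N, y i * (y j * ‖v j‖ ^ 2))
            - 2 * ∑ i, ∑ j, y i * (y j * (inner ℝ (v i) (v j) : ℝ)) := split _ _ _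
      _ = -2 * ‖∑ i, y i • v i‖ ^ 2 := by rw [hA, hB, hw]; ring
  rw [key]
  nlinarith [sq_nonneg ‖∑ i, y i • v i‖]

/-- One direction of the Schoenberg criterion: if `E` is a Euclidean distance matrix,
then `-PEP` is positive semidefinite. -/
theorem schoenberg_posSemidef {N k : ℕ} (E : Matrix (Fin N) (Fin N) ℝ)
    (v : Fin N → EuclideanSpace ℝ (Fin k))
    (hE : ∀ i j, E i j = ‖v i - v j‖ ^ 2)
    (P : Matrix (Fin N) (Fin N) ℝ)
    (hP : P = 1 - (N : ℝ)⁻¹ • Matrix.of (fun _ _ => (1 : ℝ))) :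
    (-(P * E * P)).PosSemidef := by
  have hPsymm : Pᵀ = P := by
    subst hP; ext i j
    simp [Matrix.transpose_apply, Matrix.one_apply, eq_comm]
  have hEsymm : Eᵀ = E := by
    ext i j; simp [Matrix.transpose_apply, hE, norm_sub_rev]
  have hH : (P * E * P)ᵀ = P * E * P := by
    rw [Matrix.transpose_mul, Matrix.transpose_mul, hPsymm, hEsymm, ← Matrix.mul_assoc]
  refine Matrix.PosSemidef.of_dotProduct_mulVec_nonneg ?_ ?_
  · show (-(P * E * P))ᴴ = _
    ext i j
    simp only [Matrix.conjTranspose_apply, Matrix.neg_apply, star_trivial, neg_inj]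
    conv_lhs => rw [← hH]
    rfl
  · intro x
    have hsum : ∑ i, (P *ᵥ x) i = 0 := by
      rcases Nat.eq_zero_or_pos N with h0 | h0
      · subst h0; simp
      · have hN : (N : ℝ) ≠ 0 := Nat.cast_ne_zero.mpr h0.ne'
        subst hP
        simp [Matrix.mulVec, dotProduct, Matrix.one_apply, sub_mul,
          Finset.sum_sub_distrib, Finset.sum_ite_eq, Finset.mul_sum]
        simp_rw [← mul_assoc, mul_inv_cancel₀ hN, one_mul, sub_self]
    set y := P *ᵥ x with hy
    have hrw : (star x) ⬝ᵥ ((-(P * E * P)) *ᵥ x) = -(y ⬝ᵥ (E *ᵥ y)) := by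
      rw [star_trivial, Matrix.neg_mulVec, dotProduct_neg]
      congr 1
      rw [← Matrix.mulVec_mulVec, ← Matrix.mulVec_mulVec, Matrix.dotProduct_mulVec,
        ← Matrix.mulVec_transpose, hPsymm]
    rw [hrw]
    have : y ⬝ᵥ (E *ᵥ y) = ∑ i, ∑ j, y i * (‖v i - v j‖ ^ 2 * y j) := by
      simp [dotProduct, Matrix.mulVec, hE, Finset.mul_sum]
    rw [this]
    simpa using neg_nonneg.mpr (quad_nonpos v y hsum)
end

section
/- If D is the distance matrix of a Euclidean TSP, i.e., D_{ij} = ‖vᵢ − vⱼ‖ for points v₁,...,v_N in ℝ^k, then all eigenvalues of −PDP restricted to the hyperplane orthogonal to the all-ones vector are non-negative, where P = I − (1/N)J. -/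
open MeasureTheory Set Matrix

-- Lemma A: Hadamard powers of Gram matrices are PSD (direct expansion)
lemma schur_pow {N k : ℕ} (y : Fin N → ℝ) (w : Fin N → Fin k → ℝ) (n : ℕ) :
    0 ≤ ∑ i, ∑ j, y i * y j * (∑ a, w i a * w j a) ^ n := by
  have key : ∀ i j : Fin N, (∑ a, w i a * w j a) ^ n
      = ∑ g ∈ Fintype.piFinset (fun _ : Fin n => (Finset.univ : Finset (Fin k))),
          (∏ t, w i (g t)) * (∏ t, w j (g t)) := by
    intro i j
    have : (∑ a, w i a * w j a) ^ n = ∏ _t : Fin n, (∑ a, w i a * w j a) := by simp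
    rw [this, Finset.prod_univ_sum]
    refine Finset.sum_congr rfl fun g _ => ?_
    rw [← Finset.prod_mul_distrib]
  calc ∑ i, ∑ j, y i * y j * (∑ a, w i a * w j a) ^ n
      = ∑ i, ∑ j, ∑ g ∈ Fintype.piFinset (fun _ : Fin n => (Finset.univ : Finset (Fin k))),
          (y i * ∏ t, w i (g t)) * (y j * ∏ t, w j (g t)) := by
        refine Finset.sum_congr rfl fun i _ => Finset.sum_congr rfl fun j _ => ?_
        rw [key, Finset.mul_sum]
        exact Finset.sum_congr rfl fun g _ => by ring
    _ = ∑ g ∈ Fintype.piFinset (fun _ : Fin n => (Finset.univ : Finset (Fin k))),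
          ∑ i, ∑ j, (y i * ∏ t, w i (g t)) * (y j * ∏ t, w j (g t)) := by
        rw [show (∑ i, ∑ j, ∑ g ∈ Fintype.piFinset (fun _ : Fin n => (Finset.univ : Finset (Fin k))),
            (y i * ∏ t, w i (g t)) * (y j * ∏ t, w j (g t)))
          = ∑ i, ∑ g ∈ Fintype.piFinset (fun _ : Fin n => (Finset.univ : Finset (Fin k))),
            ∑ j, (y i * ∏ t, w i (g t)) * (y j * ∏ t, w j (g t)) from
            Finset.sum_congr rfl fun i _ => Finset.sum_comm]
        exact Finset.sum_comm
    _ = ∑ g ∈ Fintype.piFinset (fun _ : Fin n => (Finset.univ : Finset (Fin k))),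
          (∑ i, y i * ∏ t, w i (g t)) ^ 2 := by
        refine Finset.sum_congr rfl fun g _ => ?_
        rw [sq, Finset.sum_mul_sum]
    _ ≥ 0 := Finset.sum_nonneg fun g _ => sq_nonneg _

lemma gauss_psd {N k : ℕ} (x : Fin N → ℝ) (v : Fin N → EuclideanSpace ℝ (Fin k)) {s : ℝ}
    (hs : 0 ≤ s) :
    0 ≤ ∑ i, ∑ j, x i * x j * Real.exp (-(s * ‖v i - v j‖ ^ 2)) := by
  set y : Fin N → ℝ := fun i => x i * Real.exp (-(s * ‖v i‖ ^ 2)) with hy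
  have hinner : ∀ i j : Fin N, (inner ℝ (v i) (v j) : ℝ) = ∑ a, v i a * v j a := by
    intro i j
    simp [PiLp.inner_apply, RCLike.inner_apply, mul_comm]
  have h1 : ∑ i, ∑ j, x i * x j * Real.exp (-(s * ‖v i - v j‖ ^ 2))
      = ∑ i, ∑ j, y i * y j * Real.exp (2 * s * (inner ℝ (v i) (v j) : ℝ)) := by
    refine Finset.sum_congr rfl fun i _ => Finset.sum_congr rfl fun j _ => ?_
    have he : Real.exp (-(s * ‖v i - v j‖ ^ 2)) = Real.exp (-(s * ‖v i‖ ^ 2)) *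
        Real.exp (-(s * ‖v j‖ ^ 2)) * Real.exp (2 * s * (inner ℝ (v i) (v j) : ℝ)) := by
      rw [← Real.exp_add, ← Real.exp_add]
      congr 1
      have hn : ‖v i - v j‖ ^ 2 = ‖v i‖ ^ 2 - 2 * (inner ℝ (v i) (v j) : ℝ) + ‖v j‖ ^ 2 :=
        norm_sub_sq_real (v i) (v j)
      rw [hn]; ring
    rw [hy]
    simp only
    rw [he]
    ring
  rw [h1]
  have hexp : ∀ c : ℝ, Real.exp c = ∑' n : ℕ, c ^ n / ((Nat.factorial n : ℕ) : ℝ) := fun c => by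
    rw [Real.exp_eq_exp_ℝ, NormedSpace.exp_eq_tsum_div]
  have hsum : ∀ (c : ℝ) (b : ℝ), Summable (fun n : ℕ => b * (c ^ n / ((Nat.factorial n : ℕ) : ℝ))) := fun c b =>
    (Real.summable_pow_div_factorial c).mul_left b
  have h2 : ∑ i, ∑ j, y i * y j * Real.exp (2 * s * (inner ℝ (v i) (v j) : ℝ))
      = ∑' n : ℕ, ∑ i, ∑ j, y i * y j * ((2 * s * (inner ℝ (v i) (v j) : ℝ)) ^ n / ((Nat.factorial n : ℕ) : ℝ)) := by
    rw [Summable.tsum_finsetSum (fun i _ => summable_sum (fun j _ => hsum _ _))]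
    refine Finset.sum_congr rfl fun i _ => ?_
    rw [Summable.tsum_finsetSum (fun j _ => hsum _ _)]
    refine Finset.sum_congr rfl fun j _ => ?_
    rw [hexp, ← tsum_mul_left]
  rw [h2]
  refine tsum_nonneg fun n => ?_
  have h3 : ∑ i, ∑ j, y i * y j * ((2 * s * (inner ℝ (v i) (v j) : ℝ)) ^ n / ((Nat.factorial n : ℕ) : ℝ))
      = ((2 * s) ^ n / ((Nat.factorial n : ℕ) : ℝ)) * ∑ i, ∑ j, y i * y j * (∑ a, v i a * v j a) ^ n := by
    rw [Finset.mul_sum]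
    refine Finset.sum_congr rfl fun i _ => ?_
    rw [Finset.mul_sum]
    refine Finset.sum_congr rfl fun j _ => ?_
    rw [hinner, mul_pow]
    ring
  rw [h3]
  exact mul_nonneg (div_nonneg (pow_nonneg (by positivity) n) (Nat.cast_nonneg _))
    (schur_pow y (fun i a => v i a) n)

lemma bern_integrable {t : ℝ} (ht : 0 ≤ t) :
    IntegrableOn (fun s : ℝ => (1 - Real.exp (-(s * t))) * s ^ (-(3/2) : ℝ)) (Ioi 0) := by
  have hmeas : ∀ (u : Set ℝ), MeasurableSet u → u ⊆ Ioi 0 →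
      AEStronglyMeasurable (fun s : ℝ => (1 - Real.exp (-(s * t))) * s ^ (-(3/2) : ℝ))
        (volume.restrict u) := by
    intro u hu hsub
    refine ContinuousOn.aestronglyMeasurable ?_ hu
    refine ContinuousOn.mul ?_ ?_
    · exact (Continuous.continuousOn (by continuity))
    · exact continuousOn_id.rpow_const fun x hx => Or.inl (ne_of_gt (hsub hx))
  have hsplit : Ioc (0:ℝ) 1 ∪ Ioi (1:ℝ) = Ioi 0 := Ioc_union_Ioi_eq_Ioi zero_le_one
  rw [← hsplit]
  refine IntegrableOn.union ?_ ?_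
  · -- near zero: bound by t * s^(-1/2)
    have hbound : IntegrableOn (fun s : ℝ => t * s ^ (-(1/2) : ℝ)) (Ioc 0 1) := by
      have := (intervalIntegral.intervalIntegrable_rpow' (a := 0) (b := 1) (r := (-(1/2) : ℝ)) (by norm_num))
      rw [intervalIntegrable_iff, uIoc_of_le zero_le_one] at this
      exact this.const_mul t
    refine Integrable.mono' hbound (hmeas _ measurableSet_Ioc Ioc_subset_Ioi_self) ?_
    refine (ae_restrict_iff' measurableSet_Ioc).mpr (Filter.Eventually.of_forall ?_)
    intro s hs
    have hs0 : 0 < s := hs.1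
    have h1 : Real.exp (-(s * t)) ≤ 1 := Real.exp_le_one_iff.mpr (neg_nonpos.mpr (mul_nonneg hs0.le ht))
    have h2 : 1 - Real.exp (-(s * t)) ≤ s * t := by
      have := Real.add_one_le_exp (-(s * t))
      linarith
    rw [norm_mul, Real.norm_of_nonneg (by linarith), Real.norm_rpow_of_nonneg hs0.le,
      Real.norm_eq_abs, abs_of_nonneg hs0.le]
    calc (1 - Real.exp (-(s * t))) * s ^ (-(3/2) : ℝ)
        ≤ (s * t) * s ^ (-(3/2) : ℝ) :=
          mul_le_mul_of_nonneg_right h2 (Real.rpow_nonneg hs0.le _)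
      _ = t * (s ^ (1:ℝ) * s ^ (-(3/2) : ℝ)) := by rw [Real.rpow_one]; ring
      _ = t * s ^ (-(1/2) : ℝ) := by rw [← Real.rpow_add hs0]; norm_num
  · -- near infinity: bound by s^(-3/2)
    have hbound : IntegrableOn (fun s : ℝ => s ^ (-(3/2) : ℝ)) (Ioi 1) :=
      integrableOn_Ioi_rpow_of_lt (by norm_num) one_pos
    refine Integrable.mono' hbound (hmeas _ measurableSet_Ioi (Ioi_subset_Ioi zero_le_one)) ?_
    refine (ae_restrict_iff' measurableSet_Ioi).mpr (Filter.Eventually.of_forall ?_)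
    intro s hs
    have hs0 : (0:ℝ) < s := lt_trans one_pos hs
    have h1 : Real.exp (-(s * t)) ≤ 1 := Real.exp_le_one_iff.mpr (neg_nonpos.mpr (mul_nonneg hs0.le ht))
    have h3 : 0 < Real.exp (-(s * t)) := Real.exp_pos _
    rw [norm_mul, Real.norm_of_nonneg (by linarith), Real.norm_rpow_of_nonneg hs0.le,
      Real.norm_eq_abs, abs_of_nonneg hs0.le]
    nth_rewrite 2 [show s ^ (-(3/2) : ℝ) = 1 * s ^ (-(3/2) : ℝ) from (one_mul _).symm]
    exact mul_le_mul_of_nonneg_right (by linarith) (Real.rpow_nonneg hs0.le _)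

lemma bern_scale {t : ℝ} (ht : 0 < t) :
    ∫ s in Ioi (0:ℝ), (1 - Real.exp (-(s * t))) * s ^ (-(3/2) : ℝ)
      = Real.sqrt t * ∫ s in Ioi (0:ℝ), (1 - Real.exp (-s)) * s ^ (-(3/2) : ℝ) := by
  set g : ℝ → ℝ := fun u => (1 - Real.exp (-u)) * u ^ (-(3/2) : ℝ) with hg
  have hpow : t ^ ((3:ℝ)/2) * t ^ (-(3/2) : ℝ) = 1 := by
    rw [← Real.rpow_add ht]
    norm_num
  have hpt : EqOn (fun s : ℝ => (1 - Real.exp (-(s * t))) * s ^ (-(3/2) : ℝ))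
      (fun s : ℝ => t ^ ((3:ℝ)/2) * g (t * s)) (Ioi 0) := by
    intro s hs
    simp only [hg]
    rw [Real.mul_rpow ht.le (le_of_lt hs), mul_comm s t]
    calc (1 - Real.exp (-(t * s))) * s ^ (-(3/2) : ℝ)
        = (t ^ ((3:ℝ)/2) * t ^ (-(3/2) : ℝ)) * ((1 - Real.exp (-(t * s))) * s ^ (-(3/2) : ℝ)) := by
          rw [hpow, one_mul]
      _ = t ^ ((3:ℝ)/2) * ((1 - Real.exp (-(t * s))) * (t ^ (-(3/2) : ℝ) * s ^ (-(3/2) : ℝ))) := by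
          ring
  rw [setIntegral_congr_fun measurableSet_Ioi hpt]
  rw [MeasureTheory.integral_const_mul]
  rw [MeasureTheory.integral_comp_mul_left_Ioi g 0 ht]
  rw [mul_zero, smul_eq_mul]
  have : t ^ ((3:ℝ)/2) * (t⁻¹ * ∫ u in Ioi (0:ℝ), g u) = Real.sqrt t * ∫ u in Ioi (0:ℝ), g u := by
    rw [← mul_assoc, ← Real.rpow_neg_one t, ← Real.rpow_add ht, Real.sqrt_eq_rpow]
    norm_num
  rw [this, hg]

lemma bern_pos : 0 < ∫ s in Ioi (0:ℝ), (1 - Real.exp (-s)) * s ^ (-(3/2) : ℝ) := by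
  have hint : IntegrableOn (fun s : ℝ => (1 - Real.exp (-s)) * s ^ (-(3/2) : ℝ)) (Ioi 0) := by
    have := bern_integrable (t := 1) zero_le_one
    simpa using this
  have hnonneg : ∀ s ∈ Ioi (0:ℝ), 0 ≤ (1 - Real.exp (-s)) * s ^ (-(3/2) : ℝ) := by
    intro s hs
    have h1 : Real.exp (-s) ≤ 1 := Real.exp_le_one_iff.mpr (by simp [le_of_lt (mem_Ioi.mp hs)])
    exact mul_nonneg (by linarith) (Real.rpow_nonneg (le_of_lt hs) _)
  set c : ℝ := (1 - Real.exp (-1)) * (2:ℝ) ^ (-(3/2) : ℝ) with hc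
  have hcpos : 0 < c := by
    have : Real.exp (-1) < 1 := Real.exp_lt_one_iff.mpr (by norm_num)
    exact mul_pos (by linarith) (Real.rpow_pos_of_pos two_pos _)
  have hsub : Ioc (1:ℝ) 2 ⊆ Ioi 0 := fun s hs => lt_trans one_pos hs.1
  have h12 : c * (volume (Ioc (1:ℝ) 2)).toReal ≤
      ∫ s in Ioc (1:ℝ) 2, (1 - Real.exp (-s)) * s ^ (-(3/2) : ℝ) := by
    refine setIntegral_ge_of_const_le_real measurableSet_Ioc (by simp) ?_ (hint.mono_set hsub)
    intro s hs
    have h1 : Real.exp (-s) ≤ Real.exp (-1) := Real.exp_le_exp.mpr (by linarith [hs.1])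
    have h2 : (2:ℝ) ^ (-(3/2) : ℝ) ≤ s ^ (-(3/2) : ℝ) :=
      Real.rpow_le_rpow_of_nonpos (lt_trans one_pos hs.1) hs.2 (by norm_num)
    rw [hc]
    exact mul_le_mul (by linarith) h2 (Real.rpow_nonneg (by norm_num) _)
      (by linarith [Real.exp_le_one_iff.mpr (show (-1:ℝ) ≤ 0 by norm_num)])
  have hvol : (volume (Ioc (1:ℝ) 2)).toReal = 1 := by
    rw [Real.volume_Ioc]
    norm_num
  have hmono : ∫ s in Ioc (1:ℝ) 2, (1 - Real.exp (-s)) * s ^ (-(3/2) : ℝ)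
      ≤ ∫ s in Ioi (0:ℝ), (1 - Real.exp (-s)) * s ^ (-(3/2) : ℝ) := by
    refine setIntegral_mono_set hint ?_ (HasSubset.Subset.eventuallyLE hsub)
    exact (ae_restrict_iff' measurableSet_Ioi).mpr (Filter.Eventually.of_forall hnonneg)
  calc (0:ℝ) < c * (volume (Ioc (1:ℝ) 2)).toReal := by rw [hvol]; simpa using hcpos
    _ ≤ _ := le_trans h12 hmono

lemma schoenberg {N k : ℕ} (x : Fin N → ℝ) (v : Fin N → EuclideanSpace ℝ (Fin k))
    (hx : ∑ i, x i = 0) :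
    ∑ i, ∑ j, x i * x j * ‖v i - v j‖ ≤ 0 := by
  set F1 : ℝ := ∫ s in Ioi (0:ℝ), (1 - Real.exp (-s)) * s ^ (-(3/2) : ℝ) with hF1
  have key : ∀ i j : Fin N, ‖v i - v j‖ * F1
      = ∫ s in Ioi (0:ℝ), (1 - Real.exp (-(s * ‖v i - v j‖ ^ 2))) * s ^ (-(3/2) : ℝ) := by
    intro i j
    rcases eq_or_lt_of_le (norm_nonneg (v i - v j)) with h | h
    · rw [← h, zero_mul]
      simp
    · have ht : (0:ℝ) < ‖v i - v j‖ ^ 2 := by positivity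
      rw [bern_scale ht, Real.sqrt_sq (norm_nonneg _)]
  have hint : ∀ i j : Fin N, Integrable
      (fun s : ℝ => x i * x j * ((1 - Real.exp (-(s * ‖v i - v j‖ ^ 2))) * s ^ (-(3/2) : ℝ)))
      (volume.restrict (Ioi 0)) :=
    fun i j => (bern_integrable (sq_nonneg _)).const_mul _
  have hsum : (∑ i, ∑ j, x i * x j * ‖v i - v j‖) * F1
      = ∫ s in Ioi (0:ℝ), ∑ i, ∑ j,
          x i * x j * ((1 - Real.exp (-(s * ‖v i - v j‖ ^ 2))) * s ^ (-(3/2) : ℝ)) := by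
    rw [Finset.sum_mul]
    rw [integral_finset_sum _ (fun i _ => integrable_finset_sum _ (fun j _ => hint i j))]
    refine Finset.sum_congr rfl fun i _ => ?_
    rw [Finset.sum_mul]
    rw [integral_finset_sum _ (fun j _ => hint i j)]
    refine Finset.sum_congr rfl fun j _ => ?_
    rw [mul_assoc, key i j, ← MeasureTheory.integral_const_mul]
  have hnonpos : ∫ s in Ioi (0:ℝ), ∑ i, ∑ j,
      x i * x j * ((1 - Real.exp (-(s * ‖v i - v j‖ ^ 2))) * s ^ (-(3/2) : ℝ)) ≤ 0 := by
    refine setIntegral_nonpos measurableSet_Ioi ?_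
    intro s hs
    have hG := gauss_psd x v (le_of_lt hs)
    have hpt : ∀ i j : Fin N,
        x i * x j * ((1 - Real.exp (-(s * ‖v i - v j‖ ^ 2))) * s ^ (-(3/2) : ℝ))
        = x i * x j * s ^ (-(3/2) : ℝ)
          - x i * x j * Real.exp (-(s * ‖v i - v j‖ ^ 2)) * s ^ (-(3/2) : ℝ) := by
      intro i j; ring
    simp_rw [hpt, Finset.sum_sub_distrib]
    have e1 : ∑ i, ∑ j, x i * x j * s ^ (-(3/2) : ℝ)
        = (∑ i, x i) * (∑ j, x j) * s ^ (-(3/2) : ℝ) := by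
      rw [Finset.sum_mul_sum, Finset.sum_mul]
      refine Finset.sum_congr rfl fun i _ => ?_
      rw [Finset.sum_mul]
    have e2 : ∑ i, ∑ j, x i * x j * Real.exp (-(s * ‖v i - v j‖ ^ 2)) * s ^ (-(3/2) : ℝ)
        = (∑ i, ∑ j, x i * x j * Real.exp (-(s * ‖v i - v j‖ ^ 2))) * s ^ (-(3/2) : ℝ) := by
      rw [Finset.sum_mul]
      refine Finset.sum_congr rfl fun i _ => ?_
      rw [Finset.sum_mul]
    rw [e1, e2, hx]
    simp only [zero_mul, zero_sub, neg_nonpos]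
    exact mul_nonneg hG (Real.rpow_nonneg (le_of_lt hs) _)
  have hSF : (∑ i, ∑ j, x i * x j * ‖v i - v j‖) * F1 ≤ 0 := hsum ▸ hnonpos
  have hpos : 0 < F1 := bern_pos
  exact le_of_mul_le_mul_right (by rw [zero_mul]; exact hSF) hpos

/-- For a Euclidean TSP distance matrix `D`, all eigenvalues of `-PDP` restricted to the
hyperplane orthogonal to the all-ones vector are non-negative. -/
theorem euclidean_tsp_eigenvalues_nonneg {N k : ℕ} (D : Matrix (Fin N) (Fin N) ℝ)
    (v : Fin N → EuclideanSpace ℝ (Fin k))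
    (hD : ∀ i j, D i j = ‖v i - v j‖)
    (P : Matrix (Fin N) (Fin N) ℝ)
    (hP : P = 1 - (N : ℝ)⁻¹ • Matrix.of (fun _ _ => (1 : ℝ))) :
    ∀ (μ : ℝ) (x : Fin N → ℝ), x ≠ 0 → ∑ i, x i = 0 →
      (-(P * D * P)).mulVec x = μ • x → 0 ≤ μ := by
  intro μ x hx0 hxsum heig
  have hPx : P.mulVec x = x := by
    funext i
    rw [hP]
    simp only [Matrix.sub_mulVec, Matrix.one_mulVec, Matrix.smul_mulVec,
      Pi.sub_apply, Pi.smul_apply, smul_eq_mul]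
    have h1 : (Matrix.of fun _ _ => (1:ℝ)).mulVec x i = ∑ j, x j := by
      simp [Matrix.mulVec, dotProduct]
    rw [h1, hxsum, mul_zero, sub_zero]
  have hxP : Matrix.vecMul x P = x := by
    funext j
    rw [hP]
    simp only [Matrix.vecMul_sub, Matrix.vecMul_one, Pi.sub_apply]
    have h1 : Matrix.vecMul x ((N:ℝ)⁻¹ • Matrix.of fun _ _ => (1:ℝ)) j
        = (∑ i, x i) * (N:ℝ)⁻¹ := by
      simp [Matrix.vecMul, dotProduct, Finset.sum_mul]
    rw [h1, hxsum, zero_mul, sub_zero]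
  have hlhs : x ⬝ᵥ ((-(P * D * P)).mulVec x) = -(x ⬝ᵥ D.mulVec x) := by
    rw [Matrix.neg_mulVec, dotProduct_neg]
    congr 1
    rw [← Matrix.mulVec_mulVec, hPx, ← Matrix.mulVec_mulVec,
      dotProduct_mulVec, hxP]
  have hrhs : x ⬝ᵥ (μ • x) = μ * (x ⬝ᵥ x) := by
    simp only [dotProduct, Pi.smul_apply, smul_eq_mul, Finset.mul_sum]
    exact Finset.sum_congr rfl fun i _ => by ring
  have hmain : μ * (x ⬝ᵥ x) = -(x ⬝ᵥ D.mulVec x) := by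
    rw [← hrhs, ← heig, hlhs]
  have hS : x ⬝ᵥ D.mulVec x = ∑ i, ∑ j, x i * x j * ‖v i - v j‖ := by
    simp only [dotProduct, Matrix.mulVec, hD]
    refine Finset.sum_congr rfl fun i _ => ?_
    rw [Finset.mul_sum]
    refine Finset.sum_congr rfl fun j _ => ?_
    ring
  have hSle : x ⬝ᵥ D.mulVec x ≤ 0 := hS ▸ schoenberg x v hxsum
  have hxx : 0 < x ⬝ᵥ x := by
    obtain ⟨i, hi⟩ := Function.ne_iff.mp hx0
    refine Finset.sum_pos' (fun j _ => mul_self_nonneg _) ⟨i, Finset.mem_univ i, ?_⟩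
    exact mul_self_pos.mpr hi
  nlinarith
end

section
/- Let G be the complete bipartite graph K_{n,m} with n, m ≥ 1 and let A be the adjacency matrix of its complement (block diagonal with blocks Jₙ − Iₙ and J_m − I_m). Then the matrix −PAP, where P = I − J/(n+m) on ℝ^{n+m}, has eigenvalues: 0 (on the all-ones vector), 1 with multiplicity n+m−2, and 1 − 2mn/(m+n) with multiplicity 1. -/
open Finset in
private lemma sum_ite_block {α : Type*} [NonAssocSemiring α] (n m : ℕ) (x y : α) :
    ∑ k : Fin (n+m), (if (k:ℕ) < n then x else y) = n * x + m * y := by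
  rw [Fin.sum_univ_add]
  simp [Fin.is_lt, Nat.not_lt.2 (Nat.le_add_right n _), mul_comm]

private lemma final_aux {F : Type*} [Field F] (n m a p : F) (ha0 : a ≠ 0) (hNK : n + m ≠ 0)
    (hmn : m + n ≠ 0) :
    p * a ^ 2 *
      ((1 + (n * ((n + m)⁻¹ * a⁻¹) + m * ((n + m)⁻¹ * a⁻¹))) *
          (1 + (n * (2 * (n + m)⁻¹ ^ 2 * m * (a⁻¹ * m)) + m * (2 * (n + m)⁻¹ ^ 2 * -n * (a⁻¹ * -n)))) -
        (n * ((n + m)⁻¹ * (a⁻¹ * m)) + m * ((n + m)⁻¹ * (a⁻¹ * -n))) *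
          (n * (2 * (n + m)⁻¹ ^ 2 * m * a⁻¹) + m * (2 * (n + m)⁻¹ ^ 2 * -n * a⁻¹))) =
    (a + 1) * p * (a + 1 - (1 - 2 * m * n / (m + n))) := by
  field_simp
  ring

set_option maxHeartbeats 2000000 in
private lemma charpoly_aux {n m : ℕ} (hn : 1 ≤ n) (hm : 1 ≤ m)
    (M : Matrix (Fin (n + m)) (Fin (n + m)) ℝ)
    (hM : ∀ i j, M i j = (if i = j then (1:ℝ) else 0) - ((n + m : ℕ) : ℝ)⁻¹
      - 2*((n + m : ℕ) : ℝ)⁻¹^2 *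
        ((if (i:ℕ) < n then (m:ℝ) else -(n:ℝ)) * (if (j:ℕ) < n then (m:ℝ) else -(n:ℝ)))) :
    M.charpoly = Polynomial.X * (Polynomial.X - Polynomial.C 1) ^ (n + m - 2) *
        (Polynomial.X - Polynomial.C (1 - 2 * (m : ℝ) * (n : ℝ) / ((m : ℝ) + (n : ℝ)))) := by
  classical
  set K := FractionRing (Polynomial ℝ) with hK
  set φ : Polynomial ℝ →+* K := algebraMap (Polynomial ℝ) K with hφdef
  have hφ : Function.Injective φ := IsFractionRing.injective _ _
  set ψ : ℝ →+* K := φ.comp (Polynomial.C : ℝ →+* Polynomial ℝ) with hψdef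
  have hψ : Function.Injective ψ := ψ.injective
  apply hφ
  set x : K := φ Polynomial.X with hxdef
  set a : K := x - 1 with hadef
  have ha0 : a ≠ 0 := by
    intro h
    refine Polynomial.X_sub_C_ne_zero (1:ℝ) (hφ ?_)
    rw [map_sub, map_zero, Polynomial.C_1, map_one]
    exact h
  have hNK : ((n:K) + (m:K)) ≠ 0 := by
    intro h
    have hre : (n:ℝ) + (m:ℝ) ≠ 0 := by
      have h1n : (1:ℝ) ≤ (n:ℝ) := Nat.one_le_cast.mpr hn
      have h1m : (1:ℝ) ≤ (m:ℝ) := Nat.one_le_cast.mpr hm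
      nlinarith
    exact hre (hψ (by rw [map_add, map_natCast, map_natCast, h, map_zero]))
  have hNK' : ((n + m : ℕ):K) ≠ 0 := by rw [Nat.cast_add]; exact hNK
  set cK : K := ((n + m : ℕ):K)⁻¹ with hcK
  set wK : Fin (n+m) → K := fun i => if (i:ℕ) < n then (m:K) else -(n:K) with hwK
  set U : Matrix (Fin (n+m)) (Fin 2) K :=
    Matrix.of (fun i t => if t = 0 then 1 else wK i) with hU
  set V : Matrix (Fin 2) (Fin (n+m)) K :=
    Matrix.of (fun t j => if t = 0 then cK else 2 * cK^2 * wK j) with hV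
  have hψc : ψ (((n + m : ℕ) : ℝ)⁻¹) = cK := by
    rw [map_inv₀, map_natCast, hcK]
  have hψw : ∀ i : Fin (n+m), ψ (if (i:ℕ) < n then (m:ℝ) else -(n:ℝ)) = wK i := by
    intro i
    rw [apply_ite ψ, map_neg, map_natCast, map_natCast, hwK]
  have key : (Matrix.charmatrix M).map φ = a • (1 + (a⁻¹ • U) * V) := by
    ext i j
    rw [Matrix.map_apply, Matrix.charmatrix_apply]
    have hL : φ ((Matrix.diagonal fun _ => Polynomial.X) i j - Polynomial.C (M i j))
        = (if i = j then x else 0) - ψ (M i j) := by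
      rw [map_sub, Matrix.diagonal_apply, apply_ite φ, map_zero, hψdef]
      rfl
    rw [hL, hM i j]
    simp only [map_sub, map_mul, map_pow, map_ofNat, map_one, map_zero, apply_ite ψ,
      hψc, hψw]
    simp only [Matrix.smul_apply, Matrix.add_apply, Matrix.one_apply, Matrix.mul_apply,
      Matrix.of_apply, Fin.sum_univ_two, smul_eq_mul, hU, hV]
    norm_num
    by_cases hij : i = j
    · subst hij
      by_cases hj2 : (i:ℕ) < n <;>
        simp only [hwK, hj2, if_true, if_false, if_pos rfl] <;>
        simp only [mul_add, ← mul_assoc, mul_inv_cancel₀ ha0, one_mul] <;> rw [hadef] <;> ring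
    · by_cases hi2 : (i:ℕ) < n <;> by_cases hj2 : (j:ℕ) < n <;>
        simp only [hwK, hij, hi2, hj2, if_true, if_false] <;>
        simp only [mul_add, ← mul_assoc, mul_inv_cancel₀ ha0, one_mul] <;> ring
  rw [Matrix.charpoly, RingHom.map_det, RingHom.mapMatrix_apply, key,
    Matrix.det_smul, Matrix.det_one_add_mul_comm, Matrix.det_fin_two]
  have conv : ∀ (f : Fin (n+m) → K) (xx yy : K), (∀ j, f j = if (j:ℕ) < n then xx else yy) →
      ∑ j, f j = n*xx + m*yy := by
    intro f xx yy h
    rw [Finset.sum_congr rfl (fun j _ => h j), sum_ite_block]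
  set G := V * (a⁻¹ • U) with hG
  have e00 : G 0 0 = (n:K) * (cK * a⁻¹) + (m:K) * (cK * a⁻¹) := by
    rw [hG, Matrix.mul_apply]
    refine conv _ _ _ (fun j => ?_)
    by_cases hj : (j:ℕ) < n <;> simp [hU, hV, hwK, hj, mul_comm]
  have e01 : G 0 1 = (n:K) * (cK * (a⁻¹ * (m:K))) + (m:K) * (cK * (a⁻¹ * (-(n:K)))) := by
    rw [hG, Matrix.mul_apply]
    refine conv _ _ _ (fun j => ?_)
    by_cases hj : (j:ℕ) < n <;> simp [hU, hV, hwK, hj, mul_comm]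
  have e10 : G 1 0 = (n:K) * (2 * cK^2 * (m:K) * a⁻¹) + (m:K) * (2 * cK^2 * (-(n:K)) * a⁻¹) := by
    rw [hG, Matrix.mul_apply]
    refine conv _ _ _ (fun j => ?_)
    by_cases hj : (j:ℕ) < n <;> simp [hU, hV, hwK, hj, mul_comm, mul_assoc]
  have e11 : G 1 1 = (n:K) * (2 * cK^2 * (m:K) * (a⁻¹ * (m:K)))
      + (m:K) * (2 * cK^2 * (-(n:K)) * (a⁻¹ * (-(n:K)))) := by
    rw [hG, Matrix.mul_apply]
    refine conv _ _ _ (fun j => ?_)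
    by_cases hj : (j:ℕ) < n <;> simp [hU, hV, hwK, hj, mul_comm, mul_assoc]
  have h00 : (1 + G) 0 0 = 1 + G 0 0 := by simp [Matrix.add_apply, Matrix.one_apply]
  have h11 : (1 + G) 1 1 = 1 + G 1 1 := by simp [Matrix.add_apply, Matrix.one_apply]
  have h01 : (1 + G) 0 1 = G 0 1 := by simp [Matrix.add_apply, Matrix.one_apply]
  have h10 : (1 + G) 1 0 = G 1 0 := by simp [Matrix.add_apply, Matrix.one_apply]
  rw [h00, h11, h01, h10, e00, e01, e10, e11]
  -- right-hand side
  rw [map_mul, map_mul, map_pow, map_sub, map_sub, Polynomial.C_1, map_one]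
  have hψlam : φ (Polynomial.C (1 - 2 * (m:ℝ) * (n:ℝ) / ((m:ℝ) + (n:ℝ))))
      = 1 - 2 * (m:K) * (n:K) / ((m:K) + (n:K)) := by
    show ψ _ = _
    rw [map_sub, map_one, map_div₀, map_mul, map_mul, map_ofNat, map_natCast, map_natCast,
      map_add, map_natCast, map_natCast]
  rw [hψlam, ← hxdef]
  -- final scalar identity
  have hcard : Fintype.card (Fin (n+m)) = (n+m-2) + 2 := by
    rw [Fintype.card_fin]; omega
  have hxa : x = a + 1 := by rw [hadef]; ring
  have hmn : (m:K) + (n:K) ≠ 0 := by rw [add_comm]; exact hNK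
  rw [hcard, pow_add, hxa, hcK, Nat.cast_add]
  have hstep : ((a:K) + 1 - 1) = a := by ring
  rw [hstep]
  generalize a ^ (n + m - 2) = p
  exact final_aux _ _ _ _ ha0 hNK hmn

/-- Eigenvalues of `-PAP` for the adjacency matrix `A` of the complement of `K_{n,m}`:
`0` (trivial), `1` with multiplicity `n+m-2`, and `1 - 2mn/(m+n)` with multiplicity `1`. -/
theorem complement_bipartite_eigenvalues {n m : ℕ} (hn : 1 ≤ n) (hm : 1 ≤ m)
    (A : Matrix (Fin (n + m)) (Fin (n + m)) ℝ)
    (hA : ∀ i j, A i j = if i ≠ j ∧ ((i : ℕ) < n ↔ (j : ℕ) < n) then 1 else 0)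
    (P : Matrix (Fin (n + m)) (Fin (n + m)) ℝ)
    (hP : P = 1 - ((n + m : ℕ) : ℝ)⁻¹ • Matrix.of (fun _ _ => (1 : ℝ))) :
    (-(P * A * P)).charpoly =
      Polynomial.X * (Polynomial.X - Polynomial.C 1) ^ (n + m - 2) *
        (Polynomial.X - Polynomial.C (1 - 2 * (m : ℝ) * (n : ℝ) / ((m : ℝ) + (n : ℝ)))) := by
  refine charpoly_aux hn hm _ ?_
  classical
  have hN : ((n + m : ℕ) : ℝ) ≠ 0 := Nat.cast_ne_zero.mpr (by omega)
  have h1n : (1:ℝ) ≤ (n:ℝ) := Nat.one_le_cast.mpr hn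
  have h1m : (1:ℝ) ≤ (m:ℝ) := Nat.one_le_cast.mpr hm
  have hN' : (n:ℝ) + (m:ℝ) ≠ 0 := by nlinarith
  have hcN : ((n + m : ℕ) : ℝ)⁻¹ * ((n + m : ℕ) : ℝ) = 1 := inv_mul_cancel₀ hN
  set c : ℝ := ((n + m : ℕ) : ℝ)⁻¹ with hc
  set J : Matrix (Fin (n+m)) (Fin (n+m)) ℝ := Matrix.of (fun _ _ => (1:ℝ)) with hJ
  set B : Matrix (Fin (n+m)) (Fin (n+m)) ℝ :=
    Matrix.of (fun i j => if (i:ℕ) < n ↔ (j:ℕ) < n then (1:ℝ) else 0) with hB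
  have hJB : J * B = Matrix.of (fun (_ j : Fin (n+m)) => if (j:ℕ) < n then (n:ℝ) else m) := by
    ext i j
    simp only [Matrix.mul_apply, hJ, hB, Matrix.of_apply, one_mul]
    by_cases h : (j:ℕ) < n <;>
      simp only [h, iff_true, iff_false, ite_not, sum_ite_block n m (1:ℝ) 0,
        sum_ite_block n m (0:ℝ) 1, mul_zero, mul_one, zero_add, add_zero] <;>
      simp [h]
  have hBJ : B * J = Matrix.of (fun (i _ : Fin (n+m)) => if (i:ℕ) < n then (n:ℝ) else m) := by
    ext i j
    simp only [Matrix.mul_apply, hJ, hB, Matrix.of_apply, mul_one]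
    by_cases h : (i:ℕ) < n <;>
      simp only [h, true_iff, false_iff, ite_not, sum_ite_block n m (1:ℝ) 0,
        sum_ite_block n m (0:ℝ) 1, mul_zero, mul_one, zero_add, add_zero] <;>
      simp [h]
  have hJBJ : (J * B) * J = Matrix.of (fun (_ _ : Fin (n+m)) => (n:ℝ)*n + m*m) := by
    rw [hJB]
    ext i j
    simp only [Matrix.mul_apply, hJ, Matrix.of_apply, mul_one]
    rw [sum_ite_block n m ((n:ℝ)) (m:ℝ)]
  have hJJ : J * J = ((n+m:ℕ):ℝ) • J := by
    ext i j
    simp [Matrix.mul_apply, hJ, Finset.sum_const]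
  have hA' : A = B - 1 := by
    ext i j
    rw [hA]
    by_cases hij : i = j
    · subst hij; simp [hB, Matrix.one_apply]
    · simp only [hB, Matrix.sub_apply, Matrix.of_apply, Matrix.one_apply, hij, if_false,
        ne_eq, not_false_eq_true, true_and, sub_zero]
  have hP' : P = 1 - c • J := by rw [hP, hc, hJ]
  have hPP : P * P = P := by
    rw [hP']
    have e : (c • J) * (c • J) = c • J := by
      rw [Matrix.smul_mul, Matrix.mul_smul, hJJ, smul_smul, smul_smul, mul_assoc, hcN, mul_one]
    rw [sub_mul, one_mul, mul_sub, Matrix.mul_one, e]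
    abel
  have hPBP : P * B * P = B - c • (B * J) - c • (J * B) + (c*c) • ((J * B) * J) := by
    rw [hP']
    have e1 : (c • J) * B = c • (J * B) := Matrix.smul_mul c J B
    have e2 : B * (c • J) = c • (B * J) := Matrix.mul_smul B c J
    have e3 : (c • (J * B)) * (c • J) = (c*c) • ((J * B) * J) := by
      rw [Matrix.smul_mul, Matrix.mul_smul, smul_smul]
    rw [sub_mul, one_mul, e1, mul_sub, Matrix.mul_one, sub_mul, e2, e3]
    abel
  have hM : -(P * A * P) = 1 - c • J - B + c • (B * J) + c • (J * B)
      - (c*c) • ((J * B) * J) := by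
    have h1 : P * A * P = P * B * P - P := by
      rw [hA', Matrix.mul_sub, mul_one, Matrix.sub_mul, hPP]
    rw [h1, hPBP, hP']
    abel
  intro i j
  rw [hJBJ, hJB, hBJ] at hM
  rw [hM]
  simp only [Matrix.sub_apply, Matrix.add_apply, Matrix.smul_apply, Matrix.one_apply,
    Matrix.of_apply, smul_eq_mul, hJB, hBJ, hB, hJ]
  by_cases hi : (i:ℕ) < n <;> by_cases hj : (j:ℕ) < n <;>
    simp only [hi, hj, if_true, if_false, iff_true, iff_false, true_iff, false_iff,
      Nat.not_lt, Matrix.of_apply]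
  all_goals (rw [hc]; push_cast; norm_num; field_simp; ring)
end

section
/- Let D be the (2N)×(2N) symmetric matrix in block form D = [[0, J],[J, 0]] where J is the N×N all-ones matrix (the 2-cluster TSP), with N ≥ 1. Then −PDP, with P = I − J_{2N}/(2N), has eigenvalue N with eigenvector (1,...,1,−1,...,−1)ᵀ, and all other eigenvalues equal to 0; in particular the rank of −PDP is 1. -/
open Matrix Polynomial

lemma charpoly_eval_aux {n : Type*} [DecidableEq n] [Fintype n] (M : Matrix n n ℝ) (r : ℝ) :
    M.charpoly.eval r = (r • (1 : Matrix n n ℝ) - M).det := by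
  rw [Matrix.charpoly, _root_.eval_det, matPolyEquiv_charmatrix]
  congr 1
  simp [Matrix.scalar, Matrix.smul_one_eq_diagonal]

/-- For the 2-cluster TSP matrix `D = [[0,J],[J,0]]`, the matrix `-PDP` has eigenvalue `N`
with eigenvector `(1,…,1,-1,…,-1)` and all other eigenvalues `0`; its rank is `1`. -/
theorem two_cluster_eigen {N : ℕ} (hN : 1 ≤ N)
    (D : Matrix (Fin (2 * N)) (Fin (2 * N)) ℝ)
    (hD : ∀ i j, D i j = if ((i : ℕ) < N ↔ (j : ℕ) < N) then 0 else 1)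
    (P : Matrix (Fin (2 * N)) (Fin (2 * N)) ℝ)
    (hP : P = 1 - ((2 * N : ℕ) : ℝ)⁻¹ • Matrix.of (fun _ _ => (1 : ℝ)))
    (w : Fin (2 * N) → ℝ)
    (hw : ∀ i, w i = if (i : ℕ) < N then 1 else -1) :
    (-(P * D * P)).mulVec w = (N : ℝ) • w ∧
    (-(P * D * P)).charpoly =
      Polynomial.X ^ (2 * N - 1) * (Polynomial.X - Polynomial.C (N : ℝ)) ∧
    (-(P * D * P)).rank = 1 := by
  have h2N : 0 < 2 * N := by omega
  have hc : ((2 * N : ℕ) : ℝ) ≠ 0 := Nat.cast_ne_zero.mpr (by omega)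
  set J : Matrix (Fin (2 * N)) (Fin (2 * N)) ℝ := Matrix.of (fun _ _ => (1 : ℝ)) with hJ
  have hJJ : J * J = ((2 * N : ℕ) : ℝ) • J := by
    ext i j
    simp [hJ, Matrix.mul_apply, Finset.card_univ]
  have hPJ : P * J = 0 := by
    rw [hP, Matrix.sub_mul, Matrix.one_mul, Matrix.smul_mul, hJJ, smul_smul,
      inv_mul_cancel₀ hc, one_smul, sub_self]
  set V : Matrix (Fin (2 * N)) (Fin (2 * N)) ℝ := Matrix.vecMulVec w w with hV
  -- sum of entries of w is zero
  have hsumw : ∑ k, w k = 0 := by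
    simp only [hw]
    rw [Fin.sum_univ_eq_sum_range (fun k => if k < N then (1 : ℝ) else -1) (2 * N)]
    rw [Finset.range_eq_Ico, show 2 * N = N + N by ring,
      ← Finset.sum_Ico_consecutive _ (Nat.zero_le N) (Nat.le_add_right N N)]
    have e1 : ∑ k ∈ Finset.Ico 0 N, (if k < N then (1 : ℝ) else -1) = N := by
      rw [Finset.sum_congr rfl (fun k hk => by
        simp only [Finset.mem_Ico] at hk
        rw [if_pos hk.2])]
      simp
    have e2 : ∑ k ∈ Finset.Ico N (N + N), (if k < N then (1 : ℝ) else -1) = -(N : ℝ) := by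
      rw [Finset.sum_congr rfl (fun k hk => by
        simp only [Finset.mem_Ico] at hk
        rw [if_neg (by omega)])]
      simp [Nat.add_sub_cancel_left]
    rw [e1, e2, add_neg_cancel]
  have hww : w ⬝ᵥ w = ((2 * N : ℕ) : ℝ) := by
    have hsq : ∀ k, w k * w k = 1 := fun k => by rw [hw]; split <;> norm_num
    simp only [dotProduct, hsq]
    simp [Finset.card_univ]
  have hJV : J * V = 0 := by
    ext i j
    simp only [Matrix.mul_apply, hJ, Matrix.of_apply, hV, Matrix.vecMulVec_apply, one_mul,
      Matrix.zero_apply]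
    rw [← Finset.sum_mul, hsumw, zero_mul]
  have hVJ : V * J = 0 := by
    ext i j
    simp only [Matrix.mul_apply, hJ, Matrix.of_apply, hV, Matrix.vecMulVec_apply, mul_one,
      Matrix.zero_apply]
    rw [← Finset.mul_sum, hsumw, mul_zero]
  have hPV : P * V = V := by
    rw [hP, Matrix.sub_mul, Matrix.one_mul, Matrix.smul_mul, hJV, smul_zero, sub_zero]
  have hVP : V * P = V := by
    rw [hP, Matrix.mul_sub, Matrix.mul_one, Matrix.mul_smul, hVJ, smul_zero, sub_zero]
  have hDd : D = (2 : ℝ)⁻¹ • (J - V) := by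
    ext i j
    rw [hD]
    simp only [Matrix.smul_apply, Matrix.sub_apply, hJ, Matrix.of_apply, hV,
      Matrix.vecMulVec_apply, hw, smul_eq_mul]
    by_cases hi : (i : ℕ) < N <;> by_cases hj : (j : ℕ) < N <;>
      simp [hi, hj] <;> norm_num
  have hM : -(P * D * P) = (2 : ℝ)⁻¹ • V := by
    have key : P * (J - V) * P = -V := by
      rw [Matrix.mul_sub, hPJ, hPV, zero_sub, Matrix.neg_mul, hVP]
    rw [hDd, Matrix.mul_smul, Matrix.smul_mul, key, smul_neg, neg_neg]
  -- Part 1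
  have part1 : (-(P * D * P)).mulVec w = (N : ℝ) • w := by
    rw [hM, Matrix.smul_mulVec]
    ext i
    simp only [Pi.smul_apply, Matrix.mulVec, dotProduct, hV, Matrix.vecMulVec_apply,
      smul_eq_mul]
    have e : ∑ j, w i * w j * w j = w i * (w ⬝ᵥ w) := by
      simp only [dotProduct]
      rw [Finset.mul_sum]
      exact Finset.sum_congr rfl fun j _ => by ring
    rw [e, hww]
    push_cast
    field_simp
  refine ⟨part1, ?_, ?_⟩
  -- Part 2: charpoly
  · apply Polynomial.funext
    intro x
    rw [charpoly_eval_aux, hM]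
    have hRHS : Polynomial.eval x
        (Polynomial.X ^ (2 * N - 1) * (Polynomial.X - Polynomial.C (N : ℝ))) =
        x ^ (2 * N) - (N : ℝ) * x ^ (2 * N - 1) := by
      simp only [eval_mul, eval_pow, eval_sub, eval_X, eval_C]
      rw [mul_sub, ← pow_succ, Nat.sub_add_cancel (by omega)]
      ring
    rw [hRHS]
    by_cases hx : x = 0
    · subst hx
      rw [zero_smul, zero_sub]
      have hdet0 : ((2 : ℝ)⁻¹ • V).det = 0 := by
        rw [← Matrix.exists_mulVec_eq_zero_iff]
        refine ⟨fun _ => 1, ?_, ?_⟩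
        · intro h
          have := congrFun h ⟨0, h2N⟩
          norm_num at this
        · have hV1 : V *ᵥ (fun _ => (1 : ℝ)) = 0 := by
            ext i
            simp only [Matrix.mulVec, dotProduct, hV, Matrix.vecMulVec_apply, mul_one,
              Pi.zero_apply]
            rw [← Finset.mul_sum, hsumw, mul_zero]
          rw [Matrix.smul_mulVec, hV1, smul_zero]
      rw [Matrix.det_neg, hdet0, mul_zero]
      rw [zero_pow (by omega), zero_pow (by omega)]
      ring
    · have key : x • (1 : Matrix (Fin (2 * N)) (Fin (2 * N)) ℝ) - (2 : ℝ)⁻¹ • V =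
          x • ((1 : Matrix (Fin (2 * N)) (Fin (2 * N)) ℝ) +
            Matrix.replicateCol (Fin 1) ((-(x⁻¹ * 2⁻¹)) • w) * Matrix.replicateRow (Fin 1) w) := by
        erw [Matrix.replicateCol_smul, Matrix.smul_mul, ← Matrix.vecMulVec_eq, smul_add, smul_smul]
        have : x * -(x⁻¹ * 2⁻¹) = -(2 : ℝ)⁻¹ := by
          field_simp
        rw [this, ← hV, neg_smul, ← sub_eq_add_neg]
      erw [key, Matrix.det_smul, Matrix.det_one_add_replicateCol_mul_replicateRow]
      have hd : w ⬝ᵥ (-(x⁻¹ * 2⁻¹)) • w = -(x⁻¹ * (N : ℝ)) := by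
        rw [dotProduct_smul, hww]
        push_cast
        field_simp
        rw [smul_eq_mul]
        field_simp
      rw [hd, Fintype.card_fin]
      have h2N1 : x ^ (2 * N) = x ^ (2 * N - 1) * x := by
        rw [← pow_succ, Nat.sub_add_cancel (by omega)]
      rw [mul_add, mul_one, mul_neg, h2N1]
      field_simp
      ring
  -- Part 3: rank
  · have hub : (-(P * D * P)).rank ≤ 1 := by
      rw [hM]
      have : (2 : ℝ)⁻¹ • V = Matrix.replicateCol (Fin 1) ((2 : ℝ)⁻¹ • w) * Matrix.replicateRow (Fin 1) w := by
        erw [Matrix.replicateCol_smul, Matrix.smul_mul, ← Matrix.vecMulVec_eq, hV]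
      rw [this]
      exact (Matrix.rank_mul_le_left _ _).trans
        ((Matrix.rank_le_card_width _).trans_eq (by simp))
    have hlb : 1 ≤ (-(P * D * P)).rank := by
      have hMw : (-(P * D * P)) *ᵥ w ≠ 0 := by
        rw [part1]
        intro h
        have := congrFun h ⟨0, h2N⟩
        simp only [Pi.smul_apply, Pi.zero_apply, smul_eq_mul] at this
        rw [hw] at this
        simp only [show ((⟨0, h2N⟩ : Fin (2 * N)) : ℕ) = 0 from rfl] at this
        rw [if_pos (by omega)] at this
        simp at this
        exact absurd this (by exact_mod_cast (by omega : N ≠ 0))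
      rw [Matrix.rank]
      have : Nontrivial (LinearMap.range (-(P * D * P)).mulVecLin) := by
        refine nontrivial_of_ne ⟨_, ⟨w, rfl⟩⟩ 0 ?_
        intro h
        apply hMw
        have := congrArg Subtype.val h
        exact this
      exact Module.finrank_pos
    omega
end

section
/- For every integer n ≥ 3, the n×n circulant matrix M with entries M_{jk} = sin(π·|j−k|/n)/sin(π/n) is traceless, and the sum of the eigenvalues μₖ = 1/(cos(π/n) − cos(2πk/n)) for k = 1,...,n−1 equals 1/(1 − cos(π/n)); i.e., ∑_{k=1}^{n−1} 1/(cos(π/n) − cos(2πk/n)) = 1/(1 − cos(π/n)). -/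
/-- The uniform circle distance matrix is traceless, and the corresponding eigenvalue sum
identity `∑_{k=1}^{n-1} 1/(cos(π/n) - cos(2πk/n)) = 1/(1 - cos(π/n))` holds. -/
theorem circle_trace_identity {n : ℕ} (hn : 3 ≤ n)
    (M : Matrix (Fin n) (Fin n) ℝ)
    (hM : ∀ j k : Fin n,
      M j k = Real.sin (Real.pi * |(j.val : ℝ) - (k.val : ℝ)| / n) / Real.sin (Real.pi / n)) :
    Matrix.trace M = 0 ∧
    ∑ k ∈ Finset.Ico 1 n,
        (Real.cos (Real.pi / n) - Real.cos (2 * Real.pi * k / n))⁻¹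
      = (1 - Real.cos (Real.pi / n))⁻¹ := by
  have hnR : (3:ℝ) ≤ (n:ℝ) := by exact_mod_cast hn
  have hn0 : (0:ℝ) < n := by linarith
  have hπ : 0 < Real.pi := Real.pi_pos
  constructor
  · rw [Matrix.trace]
    apply Finset.sum_eq_zero
    intro i _
    rw [Matrix.diag_apply, hM]
    simp
  · set t := Real.pi / (2*n) with ht
    have ht0 : 0 < t := by positivity
    have hπeq : Real.pi = 2*(n:ℝ)*t := by rw [ht]; field_simp
    have h2t : Real.pi / n = 2*t := by rw [ht]; field_simp
    have hsin : ∀ k : ℕ, 1 ≤ k → k ≤ n → 0 < Real.sin ((2*(k:ℝ)-1)*t) := by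
      intro k h1 h2
      have h1R : (1:ℝ) ≤ (k:ℝ) := by exact_mod_cast h1
      have h2R : (k:ℝ) ≤ (n:ℝ) := by exact_mod_cast h2
      apply Real.sin_pos_of_pos_of_lt_pi
      · nlinarith
      · nlinarith
    have hsin2t : 0 < Real.sin (2*t) := by
      apply Real.sin_pos_of_pos_of_lt_pi
      · positivity
      · nlinarith
    set g : ℕ → ℝ := fun k => Real.cos ((2*(k:ℝ)-1)*t) / Real.sin ((2*(k:ℝ)-1)*t) with hg
    have hterm : ∀ k ∈ Finset.Ico 1 n,
        (Real.cos (Real.pi / n) - Real.cos (2 * Real.pi * k / n))⁻¹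
        = (g k - g (k+1)) / (2 * Real.sin (2*t)) := by
      intro k hk
      obtain ⟨h1, h2⟩ := Finset.mem_Ico.mp hk
      have hm := hsin k h1 (le_of_lt h2)
      have hp := hsin (k+1) (by omega) (by omega)
      have hc2 : 2*Real.pi*(k:ℝ)/n = 4*(k:ℝ)*t := by rw [ht]; field_simp; ring
      rw [h2t, hc2]
      have hcc : Real.cos (2*t) - Real.cos (4*(k:ℝ)*t)
          = 2 * Real.sin ((2*(k:ℝ)+1)*t) * Real.sin ((2*(k:ℝ)-1)*t) := by
        rw [Real.cos_sub_cos]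
        rw [show (2*t + 4*(k:ℝ)*t)/2 = (2*(k:ℝ)+1)*t by ring,
            show (2*t - 4*(k:ℝ)*t)/2 = -((2*(k:ℝ)-1)*t) by ring, Real.sin_neg]
        ring
      rw [hcc]
      simp only [hg, Nat.cast_add, Nat.cast_one]
      rw [show (2*(((k+1):ℕ):ℝ)-1) = (2*(k:ℝ)+1) by push_cast; ring] at hp
      rw [show (2*((k:ℝ)+1)-1) = (2*(k:ℝ)+1) by ring]
      have hsub : Real.sin (2*t)
          = Real.sin ((2*(k:ℝ)+1)*t) * Real.cos ((2*(k:ℝ)-1)*t)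
            - Real.cos ((2*(k:ℝ)+1)*t) * Real.sin ((2*(k:ℝ)-1)*t) := by
        rw [← Real.sin_sub]; ring_nf
      have key : Real.cos ((2*(k:ℝ)-1)*t)/Real.sin ((2*(k:ℝ)-1)*t)
          - Real.cos ((2*(k:ℝ)+1)*t)/Real.sin ((2*(k:ℝ)+1)*t)
          = Real.sin (2*t) / (Real.sin ((2*(k:ℝ)-1)*t) * Real.sin ((2*(k:ℝ)+1)*t)) := by
        rw [div_sub_div _ _ hm.ne' hp.ne', hsub]; ring_nf
      rw [key]
      field_simp
    rw [Finset.sum_congr rfl hterm, ← Finset.sum_div, Finset.sum_Ico_eq_sum_range]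
    have htel : ∑ i ∈ Finset.range (n-1), (g (1+i) - g (1+i+1)) = g 1 - g n := by
      have h := Finset.sum_range_sub' (fun i => g (1+i)) (n-1)
      simp only [show (1:ℕ)+(n-1) = n by omega] at h
      rw [← h]
      apply Finset.sum_congr rfl
      intro i _
      simp [add_assoc]
    rw [htel]
    -- compute g 1 and g n
    have hg1 : g 1 = Real.cos t / Real.sin t := by
      simp only [hg, Nat.cast_one]
      norm_num
    have hgn : g n = - (Real.cos t / Real.sin t) := by
      simp only [hg]
      have : (2*(n:ℝ)-1)*t = Real.pi - t := by rw [hπeq]; ring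
      rw [this, Real.cos_pi_sub, Real.sin_pi_sub]
      ring
    have hsint : 0 < Real.sin t := Real.sin_pos_of_pos_of_lt_pi ht0 (by nlinarith)
    have hcost : 0 < Real.cos t := by
      apply Real.cos_pos_of_mem_Ioo
      constructor <;> nlinarith
    have hcos2t : Real.cos (2*t) = 1 - 2 * Real.sin t ^ 2 := by
      rw [Real.cos_two_mul]
      nlinarith [Real.sin_sq_add_cos_sq t]
    rw [hg1, hgn, h2t, hcos2t, Real.sin_two_mul]
    field_simp
    ring
end
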